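/- Let P, Q be probability distributions on ℝ with continuously differentiable CDFs F_X, F_Y and everywhere positive densities f_X, f_Y, so that F_X is strictly increasing with differentiable inverse F_X⁻¹. Then the random variable V = min{F_X(Y), 1 − F_X(Y)} with Y ∼ Q has probability density f_V(z) = f_Y(F_X⁻¹(z)) / f_X(F_X⁻¹(z)) + f_Y(F_X⁻¹(1 − z)) / f_X(F_X⁻¹(1 − z)) for z ∈ (0, 1/2). -/

import Mathlib

open MeasureTheory Set Filter Topology

namespace HDAux

variable {f : ℝ → ℝ}

lemma integrable_of_density (hpos : ∀ x, 0 ≤ f x) (hc : Continuous f)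
    (h1 : ∫⁻ x, ENNReal.ofReal (f x) = 1) : Integrable f := by
  refine ⟨hc.aestronglyMeasurable, ?_⟩
  rw [hasFiniteIntegral_iff_ofReal (Eventually.of_forall hpos)]
  simp [h1]

/-- canonical cdf of a density -/
noncomputable def cdf (f : ℝ → ℝ) (x : ℝ) : ℝ :=
  ((volume.withDensity fun t => ENNReal.ofReal (f t)) (Iic x)).toReal

lemma cdf_ofReal (hpos : ∀ x, 0 ≤ f x) (hc : Continuous f)
    (h1 : ∫⁻ x, ENNReal.ofReal (f x) = 1) (x : ℝ) :
    (volume.withDensity fun t => ENNReal.ofReal (f t)) (Iic x)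
      = ENNReal.ofReal (∫ t in Iic x, f t) := by
  rw [withDensity_apply _ measurableSet_Iic,
    ← ofReal_integral_eq_lintegral_ofReal (integrable_of_density hpos hc h1).integrableOn
      (Eventually.of_forall hpos)]

lemma cdf_eq (hpos : ∀ x, 0 ≤ f x) (hc : Continuous f)
    (h1 : ∫⁻ x, ENNReal.ofReal (f x) = 1) (x : ℝ) :
    cdf f x = ∫ t in Iic x, f t := by
  rw [cdf, cdf_ofReal hpos hc h1,
    ENNReal.toReal_ofReal (setIntegral_nonneg measurableSet_Iic fun t _ => hpos t)]

lemma cdf_hasDerivAt (hpos : ∀ x, 0 ≤ f x) (hc : Continuous f)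
    (h1 : ∫⁻ x, ENNReal.ofReal (f x) = 1) (x : ℝ) :
    HasDerivAt (cdf f) (f x) x := by
  have hint := integrable_of_density hpos hc h1
  have key : ∀ y, cdf f y = cdf f 0 + ∫ t in (0:ℝ)..y, f t := by
    intro y
    have e := intervalIntegral.integral_Iic_sub_Iic (a := (0:ℝ)) (b := y) hint.integrableOn hint.integrableOn
    rw [cdf_eq hpos hc h1, cdf_eq hpos hc h1]
    linarith
  have h2 : HasDerivAt (fun y => cdf f 0 + ∫ t in (0:ℝ)..y, f t) (f x) x :=
    (intervalIntegral.integral_hasDerivAt_right (hint.intervalIntegrable)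
      (hc.stronglyMeasurableAtFilter _ _) hc.continuousAt).const_add _
  exact h2.congr_of_eventuallyEq (Eventually.of_forall key)

lemma cdf_strictMono (hpos : ∀ x, 0 < f x) (hc : Continuous f)
    (h1 : ∫⁻ x, ENNReal.ofReal (f x) = 1) : StrictMono (cdf f) :=
  strictMono_of_deriv_pos fun x => by
    rw [(cdf_hasDerivAt (fun y => (hpos y).le) hc h1 x).deriv]; exact hpos x

lemma cdf_nonneg (x : ℝ) : 0 ≤ cdf f x := ENNReal.toReal_nonneg

lemma measure_univ_eq (h1 : ∫⁻ x, ENNReal.ofReal (f x) = 1) :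
    (volume.withDensity fun t => ENNReal.ofReal (f t)) univ = 1 := by
  rw [withDensity_apply _ MeasurableSet.univ, Measure.restrict_univ]; exact h1

lemma cdf_le_one (h1 : ∫⁻ x, ENNReal.ofReal (f x) = 1) (x : ℝ) : cdf f x ≤ 1 := by
  have h2 : (volume.withDensity fun t => ENNReal.ofReal (f t)) (Iic x) ≤ 1 := by
    rw [← measure_univ_eq h1]; exact measure_mono (subset_univ _)
  have h3 := ENNReal.toReal_mono ENNReal.one_ne_top h2
  rw [ENNReal.toReal_one] at h3
  exact h3

lemma cdf_tendsto_atTop (h1 : ∫⁻ x, ENNReal.ofReal (f x) = 1) :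
    Tendsto (cdf f) atTop (𝓝 1) := by
  have huniv := measure_univ_eq h1
  have h := (ENNReal.tendsto_toReal
      (show (volume.withDensity fun t => ENNReal.ofReal (f t)) univ ≠ ⊤ by
        rw [huniv]; exact ENNReal.one_ne_top)).comp
    (tendsto_measure_Iic_atTop (volume.withDensity fun t => ENNReal.ofReal (f t)))
  rw [huniv, ENNReal.toReal_one] at h
  exact h

lemma cdf_tendsto_atBot (h1 : ∫⁻ x, ENNReal.ofReal (f x) = 1) :
    Tendsto (cdf f) atBot (𝓝 0) := by
  set μ := volume.withDensity fun t => ENNReal.ofReal (f t) with hμ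
  have hfin : ∃ x : ℝ, μ (Iic x) ≠ ⊤ :=
    ⟨0, ne_top_of_le_ne_top
      (show μ univ ≠ ⊤ by rw [hμ, measure_univ_eq h1]; exact ENNReal.one_ne_top)
      (measure_mono (subset_univ _))⟩
  have h := tendsto_measure_iInter_atBot (μ := μ)
    (fun x : ℝ => measurableSet_Iic.nullMeasurableSet) monotone_Iic hfin
  have hempty : ⋂ x : ℝ, Iic x = (∅ : Set ℝ) := by
    ext y
    simp only [mem_iInter, mem_Iic, mem_empty_iff_false, iff_false, not_forall, not_le]
    exact ⟨y - 1, by linarith⟩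
  rw [hempty] at h
  simp only [measure_empty] at h
  have h2 := (ENNReal.tendsto_toReal (show (0:ENNReal) ≠ ⊤ by simp)).comp h
  rw [ENNReal.toReal_zero] at h2
  exact h2

end HDAux
open HDAux in
theorem hd_cross_density
    (P Q : Measure ℝ) [IsProbabilityMeasure P] [IsProbabilityMeasure Q]
    (fX fY : ℝ → ℝ) (hfXpos : ∀ x, 0 < fX x) (hfYpos : ∀ x, 0 < fY x)
    (hfXc : Continuous fX) (hfYc : Continuous fY)
    (hP : P = volume.withDensity (fun x => ENNReal.ofReal (fX x)))
    (hQ : Q = volume.withDensity (fun x => ENNReal.ofReal (fY x)))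
    (FX : ℝ → ℝ) (hFX : ∀ x, FX x = (P (Iic x)).toReal)
    (FXinv : ℝ → ℝ) (hinv : ∀ z ∈ Ioo (0 : ℝ) 1, FX (FXinv z) = z) :
    Measure.map (fun y => min (FX y) (1 - FX y)) Q =
      volume.withDensity (fun z => ENNReal.ofReal
        (indicator (Ioo (0 : ℝ) (1 / 2))
          (fun z => fY (FXinv z) / fX (FXinv z) + fY (FXinv (1 - z)) / fX (FXinv (1 - z)))
          z)) := by
  classical
  have hposX : ∀ x, 0 ≤ fX x := fun x => (hfXpos x).le
  have hposY : ∀ x, 0 ≤ fY x := fun x => (hfYpos x).le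
  have h1X : ∫⁻ x, ENNReal.ofReal (fX x) = 1 := by
    have h := measure_univ (μ := P)
    rw [hP, withDensity_apply _ MeasurableSet.univ, Measure.restrict_univ] at h
    exact h
  have h1Y : ∫⁻ x, ENNReal.ofReal (fY x) = 1 := by
    have h := measure_univ (μ := Q)
    rw [hQ, withDensity_apply _ MeasurableSet.univ, Measure.restrict_univ] at h
    exact h
  have hFXeq : FX = cdf fX := by
    funext x; rw [hFX x, hP]; rfl
  set FY : ℝ → ℝ := cdf fY with hFYdef
  -- basic properties of FX
  have hFXd : ∀ x, HasDerivAt FX (fX x) x := by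
    rw [hFXeq]; exact cdf_hasDerivAt hposX hfXc h1X
  have hFXmono : StrictMono FX := hFXeq ▸ cdf_strictMono hfXpos hfXc h1X
  have hFX0 : ∀ x, 0 < FX x := by
    intro x
    have h1 : FX (x - 1) < FX x := hFXmono (by linarith)
    have h0 : 0 ≤ FX (x - 1) := by rw [hFXeq]; exact cdf_nonneg _
    linarith
  have hFX1 : ∀ x, FX x < 1 := by
    intro x
    have h1 : FX x < FX (x + 1) := hFXmono (by linarith)
    have h0 : FX (x + 1) ≤ 1 := by rw [hFXeq]; exact cdf_le_one h1X _
    linarith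
  -- basic properties of FY
  have hFYd : ∀ x, HasDerivAt FY (fY x) x := cdf_hasDerivAt hposY hfYc h1Y
  have hFYc : Continuous FY := continuous_iff_continuousAt.2 fun x => (hFYd x).continuousAt
  have hFYnn : ∀ x, 0 ≤ FY x := fun x => cdf_nonneg x
  have hFYle : ∀ x, FY x ≤ 1 := cdf_le_one h1Y
  -- inverse properties
  have hinvlt : ∀ {z w : ℝ}, z ∈ Ioo (0:ℝ) 1 → w ∈ Ioo (0:ℝ) 1 → z < w → FXinv z < FXinv w := by
    intro z w hz hw h
    exact hFXmono.lt_iff_lt.mp (by rw [hinv z hz, hinv w hw]; exact h)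
  have hinvcont : ∀ z ∈ Ioo (0:ℝ) 1, ContinuousAt FXinv z := by
    intro z hz
    refine tendsto_order.2 ⟨?_, ?_⟩
    · intro l hl
      have hFl : FX l < z := by rw [← hinv z hz]; exact hFXmono hl
      filter_upwards [Ioo_mem_nhds hFl hz.2] with w hw
      have hw01 : w ∈ Ioo (0:ℝ) 1 := ⟨lt_trans (hFX0 l) hw.1, hw.2⟩
      exact hFXmono.lt_iff_lt.mp (by rw [hinv w hw01]; exact hw.1)
    · intro u hu
      have hFu : z < FX u := by rw [← hinv z hz]; exact hFXmono hu
      filter_upwards [Ioo_mem_nhds hz.1 hFu] with w hw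
      have hw01 : w ∈ Ioo (0:ℝ) 1 := ⟨hw.1, lt_trans hw.2 (hFX1 u)⟩
      exact hFXmono.lt_iff_lt.mp (by rw [hinv w hw01]; exact hw.2)
  have hinvd : ∀ z ∈ Ioo (0:ℝ) 1, HasDerivAt FXinv (fX (FXinv z))⁻¹ z := by
    intro z hz
    refine HasDerivAt.of_local_left_inverse (hinvcont z hz) (hFXd _) (ne_of_gt (hfXpos _)) ?_
    filter_upwards [Ioo_mem_nhds hz.1 hz.2] with w hw using hinv w hw
  have hmem : ∀ z ∈ Ioo (0:ℝ) (1/2), z ∈ Ioo (0:ℝ) 1 := by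
    intro z hz; exact ⟨hz.1, by linarith [hz.2]⟩
  have hmem' : ∀ z ∈ Ioo (0:ℝ) (1/2), (1 - z) ∈ Ioo (0:ℝ) 1 := by
    intro z hz; exact ⟨by linarith [hz.2], by linarith [hz.1]⟩
  set g : ℝ → ℝ := fun z => fY (FXinv z) / fX (FXinv z) + fY (FXinv (1 - z)) / fX (FXinv (1 - z))
    with hgdef
  set H : ℝ → ℝ := fun z => FY (FXinv z) - FY (FXinv (1 - z)) with hHdef
  set ν : Measure ℝ :=
    volume.withDensity (fun z => ENNReal.ofReal (indicator (Ioo (0:ℝ) (1/2)) g z)) with hνdef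
  -- derivative of H
  have hHd : ∀ z ∈ Ioo (0:ℝ) (1/2), HasDerivAt H (g z) z := by
    intro z hz
    have h1 : HasDerivAt (fun w => FY (FXinv w)) (fY (FXinv z) * (fX (FXinv z))⁻¹) z :=
      (hFYd _).comp z (hinvd z (hmem z hz))
    have hlin : HasDerivAt (fun w : ℝ => 1 - w) (-1) z := (hasDerivAt_id z).const_sub 1
    have h2 : HasDerivAt (fun w => FY (FXinv (1 - w)))
        ((fY (FXinv (1 - z)) * (fX (FXinv (1 - z)))⁻¹) * (-1)) z := by
      have hi : HasDerivAt (fun w => FY (FXinv w))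
          (fY (FXinv (1 - z)) * (fX (FXinv (1 - z)))⁻¹) (1 - z) :=
        (hFYd _).comp (1 - z) (hinvd _ (hmem' z hz))
      exact hi.comp z hlin
    have h3 := h1.sub h2
    have : fY (FXinv z) * (fX (FXinv z))⁻¹ -
        fY (FXinv (1 - z)) * (fX (FXinv (1 - z)))⁻¹ * (-1) = g z := by
      rw [hgdef]; simp only []; rw [div_eq_mul_inv, div_eq_mul_inv]; ring
    rw [this] at h3
    exact h3
  have hgcont : ∀ z ∈ Ioo (0:ℝ) (1/2), ContinuousAt g z := by
    intro z hz
    have c1 : ContinuousAt (fun w => fY (FXinv w) / fX (FXinv w)) z :=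
      ((hfYc.continuousAt).comp (hinvcont z (hmem z hz))).div
        ((hfXc.continuousAt).comp (hinvcont z (hmem z hz))) (ne_of_gt (hfXpos _))
    have clin : ContinuousAt (fun w : ℝ => 1 - w) z :=
      (continuous_const.sub continuous_id).continuousAt
    have c2 : ContinuousAt (fun w => fY (FXinv (1 - w)) / fX (FXinv (1 - w))) z :=
      (((hfYc.continuousAt).comp (hinvcont _ (hmem' z hz))).div
        ((hfXc.continuousAt).comp (hinvcont _ (hmem' z hz))) (ne_of_gt (hfXpos _))).comp clin
    exact c1.add c2
  have hgpos : ∀ z, 0 ≤ g z := fun z =>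
    add_nonneg (div_nonneg (hposY _) (hposX _)) (div_nonneg (hposY _) (hposX _))
  -- key FTC computation
  have hIoc : ∀ ε a : ℝ, 0 < ε → ε ≤ a → a < 1/2 →
      ν (Ioc ε a) = ENNReal.ofReal (H a - H ε) := by
    intro ε a hε hεa ha
    have hsub : Ioc ε a ⊆ Ioo (0:ℝ) (1/2) := fun z hz =>
      ⟨hε.trans hz.1, lt_of_le_of_lt hz.2 ha⟩
    rw [hνdef, withDensity_apply _ measurableSet_Ioc]
    have e1 : ∫⁻ z in Ioc ε a, ENNReal.ofReal (indicator (Ioo (0:ℝ) (1/2)) g z)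
        = ∫⁻ z in Ioc ε a, ENNReal.ofReal (g z) :=
      setLIntegral_congr_fun measurableSet_Ioc
        (fun z hz => by rw [indicator_of_mem (hsub hz)])
    rw [e1]
    have hcont : ContinuousOn g (Icc ε a) := fun z hz =>
      (hgcont z ⟨hε.trans_le hz.1, hz.2.trans_lt ha⟩).continuousWithinAt
    have hint : IntegrableOn g (Ioc ε a) :=
      (hcont.integrableOn_Icc).mono_set Ioc_subset_Icc_self
    rw [← ofReal_integral_eq_lintegral_ofReal hint (Eventually.of_forall hgpos)]
    congr 1
    have hFTC : ∫ z in ε..a, g z = H a - H ε := by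
      refine intervalIntegral.integral_eq_sub_of_hasDerivAt ?_ ?_
      · intro z hz
        rw [uIcc_of_le hεa] at hz
        exact hHd z ⟨hε.trans_le hz.1, hz.2.trans_lt ha⟩
      · have : ContinuousOn g (uIcc ε a) := by rw [uIcc_of_le hεa]; exact hcont
        exact this.intervalIntegrable
    rw [← intervalIntegral.integral_of_le hεa, hFTC]
  -- limits of H at 0⁺
  have hinv_bot : Tendsto FXinv (𝓝[>] (0:ℝ)) atBot := by
    refine tendsto_atBot.2 fun b => ?_
    filter_upwards [Ioo_mem_nhdsGT_of_mem
      (show (0:ℝ) ∈ Ico (0:ℝ) (FX b) from ⟨le_refl _, hFX0 b⟩)] with z hz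
    have hz01 : z ∈ Ioo (0:ℝ) 1 := ⟨hz.1, hz.2.trans (hFX1 b)⟩
    exact (hFXmono.lt_iff_lt.mp (by rw [hinv z hz01]; exact hz.2)).le
  have hinv_top : Tendsto (fun z => FXinv (1 - z)) (𝓝[>] (0:ℝ)) atTop := by
    refine tendsto_atTop.2 fun b => ?_
    filter_upwards [Ioo_mem_nhdsGT_of_mem
      (show (0:ℝ) ∈ Ico (0:ℝ) (1 - FX b) from ⟨le_refl _, by linarith [hFX1 b]⟩)] with z hz
    have h1z : (1 - z) ∈ Ioo (0:ℝ) 1 := ⟨by linarith [hz.2, hFX0 b], by linarith [hz.1]⟩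
    have hlt : FX b < 1 - z := by linarith [hz.2]
    exact (hFXmono.lt_iff_lt.mp (by rw [hinv _ h1z]; exact hlt)).le
  have hHtend : Tendsto H (𝓝[>] (0:ℝ)) (𝓝 (-1)) := by
    have t1 : Tendsto (fun z => FY (FXinv z)) (𝓝[>] (0:ℝ)) (𝓝 0) :=
      (cdf_tendsto_atBot h1Y).comp hinv_bot
    have t2 : Tendsto (fun z => FY (FXinv (1 - z))) (𝓝[>] (0:ℝ)) (𝓝 1) :=
      (cdf_tendsto_atTop h1Y).comp hinv_top
    have := t1.sub t2
    simpa [hHdef] using this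
  -- sequences tending to 0⁺
  have hseq : ∀ a : ℝ, 0 < a → Tendsto (fun n : ℕ => a / ((n:ℝ) + 2)) atTop (𝓝[>] 0) := by
    intro a ha
    refine tendsto_nhdsWithin_of_tendsto_nhds_of_eventually_within _ ?_
      (Eventually.of_forall fun n => mem_Ioi.2 (by positivity))
    have hden : Tendsto (fun n : ℕ => (n:ℝ) + 2) atTop atTop :=
      tendsto_atTop_add_const_right _ 2 tendsto_natCast_atTop_atTop
    simpa using Tendsto.div_atTop (tendsto_const_nhds (x := a)) hden
  -- measure of Ioc 0 a
  have hν0a : ∀ a ∈ Ioo (0:ℝ) (1/2), ν (Ioc 0 a) = ENNReal.ofReal (H a + 1) := by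
    intro a ha
    set s : ℕ → Set ℝ := fun n => Ioc (a / ((n:ℝ) + 2)) a with hsdef
    have hsmono : Monotone s := by
      intro m n hmn
      apply Ioc_subset_Ioc_left
      apply div_le_div_of_nonneg_left ha.1.le (by positivity)
      exact_mod_cast by exact_mod_cast add_le_add_left (Nat.cast_le.2 hmn) (2:ℝ)
    have hunion : ⋃ n, s n = Ioc 0 a := by
      ext t
      simp only [hsdef, mem_iUnion, mem_Ioc]
      constructor
      · rintro ⟨n, h1, h2⟩
        exact ⟨lt_trans (div_pos ha.1 (by positivity)) h1, h2⟩
      · rintro ⟨h1, h2⟩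
        obtain ⟨n, hn⟩ := exists_nat_gt (a / t)
        refine ⟨n, ?_, h2⟩
        rw [div_lt_iff₀ (by positivity : (0:ℝ) < (n:ℝ) + 2), mul_comm]
        have h3 : a / t < (n:ℝ) + 2 := hn.trans_le (by linarith)
        exact (div_lt_iff₀ h1).mp h3
    have htend := tendsto_measure_iUnion_atTop (μ := ν) hsmono
    rw [hunion] at htend
    have heval : ∀ n : ℕ, ν (s n) = ENNReal.ofReal (H a - H (a / ((n:ℝ) + 2))) := by
      intro n
      refine hIoc _ _ (div_pos ha.1 (by positivity)) ?_ ha.2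
      apply div_le_self ha.1.le
      have : (0:ℝ) ≤ (n:ℝ) := Nat.cast_nonneg n
      linarith
    have htend2 : Tendsto (fun n : ℕ => ν (s n)) atTop (𝓝 (ENNReal.ofReal (H a + 1))) := by
      simp only [heval]
      have hH2 : Tendsto (fun n : ℕ => H (a / ((n:ℝ) + 2))) atTop (𝓝 (-1)) :=
        hHtend.comp (hseq a ha.1)
      have h4 : Tendsto (fun n : ℕ => H a - H (a / ((n:ℝ) + 2))) atTop (𝓝 (H a + 1)) := by
        have := (tendsto_const_nhds (x := H a) (f := atTop (α := ℕ))).sub hH2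
        simpa [sub_neg_eq_add] using this
      exact (ENNReal.continuous_ofReal.tendsto _).comp h4
    exact tendsto_nhds_unique htend htend2
  -- ν of Iic 0 is zero
  have hν0 : ν (Iic (0:ℝ)) = 0 := by
    rw [hνdef, withDensity_apply _ measurableSet_Iic]
    have : ∫⁻ z in Iic (0:ℝ), ENNReal.ofReal (indicator (Ioo (0:ℝ) (1/2)) g z)
        = ∫⁻ z in Iic (0:ℝ), 0 := by
      refine setLIntegral_congr_fun measurableSet_Iic (fun z hz => ?_)
      rw [indicator_of_notMem (fun hmem => absurd hmem.1 (not_lt.2 hz))]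
      simp
    rw [this, lintegral_zero]
  have hνIic : ∀ a ∈ Ioo (0:ℝ) (1/2), ν (Iic a) = ENNReal.ofReal (H a + 1) := by
    intro a ha
    have hsplit : Iic a = Iic 0 ∪ Ioc 0 a := (Iic_union_Ioc_eq_Iic ha.1.le).symm
    rw [hsplit, measure_union (Iic_disjoint_Ioc le_rfl) measurableSet_Ioc, hν0, zero_add,
      hν0a a ha]
  -- ν of Ioo 0 (1/2) is 1
  have hHcont : ContinuousAt H (1/2 : ℝ) := by
    have c1 : ContinuousAt (fun z => FY (FXinv z)) (1/2:ℝ) :=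
      (hFYc.continuousAt).comp (hinvcont _ (by norm_num))
    have c2 : ContinuousAt (fun z => FY (FXinv (1 - z))) (1/2:ℝ) :=
      ((hFYc.continuousAt).comp (hinvcont _ (by norm_num))).comp
        ((continuous_const.sub continuous_id).continuousAt)
    exact c1.sub c2
  have hH12 : H (1/2 : ℝ) = 0 := by
    rw [hHdef]; norm_num
  have hνIoo : ν (Ioo (0:ℝ) (1/2)) = 1 := by
    set s : ℕ → Set ℝ := fun n => Ioc ((1:ℝ)/2 / ((n:ℝ) + 2)) (1/2 - 1/2 / ((n:ℝ) + 2))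
      with hsdef
    have hεle : ∀ n : ℕ, (1:ℝ)/2 / ((n:ℝ) + 2) ≤ 1/4 := by
      intro n
      apply div_le_of_le_mul₀ (by positivity) (by norm_num)
      have : (0:ℝ) ≤ (n:ℝ) := Nat.cast_nonneg n
      nlinarith
    have hsmono : Monotone s := by
      intro m n hmn
      have hc : ((m:ℝ) + 2) ≤ ((n:ℝ) + 2) := by
        exact_mod_cast add_le_add_left (Nat.cast_le.2 hmn) (2:ℝ)
      have hd : (1:ℝ)/2 / ((n:ℝ) + 2) ≤ 1/2 / ((m:ℝ) + 2) :=
        div_le_div_of_nonneg_left (by norm_num) (by positivity) hc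
      exact Ioc_subset_Ioc hd (by linarith)
    have hunion : ⋃ n, s n = Ioo (0:ℝ) (1/2) := by
      ext t
      simp only [hsdef, mem_iUnion, mem_Ioc, mem_Ioo]
      constructor
      · rintro ⟨n, h1, h2⟩
        have hp : (0:ℝ) < 1/2 / ((n:ℝ) + 2) := by positivity
        exact ⟨lt_trans hp h1, by linarith⟩
      · rintro ⟨h1, h2⟩
        set m : ℝ := min t (1/2 - t) with hmdef
        have hm : 0 < m := lt_min h1 (by linarith)
        obtain ⟨n, hn⟩ := exists_nat_gt ((1:ℝ)/2 / m)
        have h3 : (1:ℝ)/2 / m < (n:ℝ) + 2 := hn.trans_le (by linarith)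
        have h4 : (1:ℝ)/2 / ((n:ℝ) + 2) < m := by
          rw [div_lt_iff₀ (by positivity : (0:ℝ) < (n:ℝ) + 2), mul_comm]
          exact (div_lt_iff₀ hm).mp h3
        refine ⟨n, lt_of_lt_of_le h4 (min_le_left _ _), ?_⟩
        have := min_le_right t (1/2 - t)
        linarith [h4.le.trans (min_le_right t (1/2 - t))]
    have htend := tendsto_measure_iUnion_atTop (μ := ν) hsmono
    rw [hunion] at htend
    have heval : ∀ n : ℕ, ν (s n)
        = ENNReal.ofReal (H (1/2 - 1/2 / ((n:ℝ) + 2)) - H (1/2 / ((n:ℝ) + 2))) := by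
      intro n
      refine hIoc _ _ (by positivity) (by linarith [hεle n]) (by linarith [hεle n,
        (by positivity : (0:ℝ) < 1/2 / ((n:ℝ) + 2))])
    have htend2 : Tendsto (fun n : ℕ => ν (s n)) atTop (𝓝 1) := by
      simp only [heval]
      have hH2 : Tendsto (fun n : ℕ => H ((1:ℝ)/2 / ((n:ℝ) + 2))) atTop (𝓝 (-1)) :=
        hHtend.comp (hseq (1/2) one_half_pos)
      have ha2 : Tendsto (fun n : ℕ => (1:ℝ)/2 - 1/2 / ((n:ℝ) + 2)) atTop (𝓝 (1/2)) := by
        have := (tendsto_const_nhds (x := (1:ℝ)/2) (f := atTop (α := ℕ))).sub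
          ((hseq (1/2) one_half_pos).mono_right nhdsWithin_le_nhds)
        simpa using this
      have hH1 : Tendsto (fun n : ℕ => H ((1:ℝ)/2 - 1/2 / ((n:ℝ) + 2))) atTop (𝓝 0) := by
        have := hHcont.tendsto.comp ha2
        rwa [hH12] at this
      have h4 : Tendsto (fun n : ℕ => H ((1:ℝ)/2 - 1/2 / ((n:ℝ) + 2))
          - H ((1:ℝ)/2 / ((n:ℝ) + 2))) atTop (𝓝 1) := by
        have := hH1.sub hH2
        simpa [sub_neg_eq_add] using this
      have h5 := (ENNReal.continuous_ofReal.tendsto _).comp h4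
      simpa [Function.comp_def] using h5
    exact tendsto_nhds_unique htend htend2
  have hνuniv : ν univ = 1 := by
    have hdec : (fun z => ENNReal.ofReal (indicator (Ioo (0:ℝ) (1/2)) g z))
        = indicator (Ioo (0:ℝ) (1/2)) (fun z => ENNReal.ofReal (g z)) := by
      funext z
      by_cases h : z ∈ Ioo (0:ℝ) (1/2)
      · rw [indicator_of_mem h, indicator_of_mem h]
      · rw [indicator_of_notMem h, indicator_of_notMem h]; simp
    have huniv : ν univ = ∫⁻ z in Ioo (0:ℝ) (1/2), ENNReal.ofReal (g z) := by
      rw [hνdef, withDensity_apply _ MeasurableSet.univ, Measure.restrict_univ, hdec,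
        lintegral_indicator measurableSet_Ioo]
    have hIooeq : ν (Ioo (0:ℝ) (1/2)) = ∫⁻ z in Ioo (0:ℝ) (1/2), ENNReal.ofReal (g z) := by
      rw [hνdef, withDensity_apply _ measurableSet_Ioo]
      exact setLIntegral_congr_fun measurableSet_Ioo
        (fun z hz => by rw [indicator_of_mem hz])
    rw [huniv, ← hIooeq, hνIoo]
  haveI : IsFiniteMeasure ν := ⟨by rw [hνuniv]; exact ENNReal.one_lt_top⟩
  -- the map side
  have hFXcont : Continuous FX := continuous_iff_continuousAt.2 fun x => (hFXd x).continuousAt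
  have hVmeas : Measurable (fun y => min (FX y) (1 - FX y)) :=
    (hFXcont.min (continuous_const.sub hFXcont)).measurable
  haveI : IsProbabilityMeasure (Measure.map (fun y => min (FX y) (1 - FX y)) Q) :=
    Measure.isProbabilityMeasure_map hVmeas.aemeasurable
  have hQIic : ∀ v : ℝ, Q (Iic v) = ENNReal.ofReal (FY v) := by
    intro v
    rw [hQ, cdf_ofReal hposY hfYc h1Y v, hFYdef, cdf_eq hposY hfYc h1Y]
  have hQIci : ∀ v : ℝ, Q (Ici v) = ENNReal.ofReal (1 - FY v) := by
    intro v
    have hac : Q ≪ volume := hQ ▸ withDensity_absolutelyContinuous volume _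
    have hio : Q (Iio v) = Q (Iic v) :=
      measure_congr ((Iio_ae_eq_Iic (μ := volume) (a := v)).filter_mono hac.ae_le)
    rw [← compl_Iio, measure_compl measurableSet_Iio (measure_ne_top Q _), measure_univ,
      hio, hQIic v, show (1:ENNReal) = ENNReal.ofReal 1 by simp,
      ← ENNReal.ofReal_sub _ (hFYnn v)]
  -- final extensionality
  refine Measure.ext_of_Iic (Measure.map _ Q) _ fun a => ?_
  rw [Measure.map_apply hVmeas measurableSet_Iic]
  rcases le_or_gt a 0 with h0 | h0
  · have hpre : (fun y => min (FX y) (1 - FX y)) ⁻¹' Iic a = (∅ : Set ℝ) := by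
      ext y
      simp only [mem_preimage, mem_Iic, mem_empty_iff_false, iff_false, not_le]
      have h1 := hFX0 y
      have h2 := hFX1 y
      exact lt_of_le_of_lt h0 (lt_min h1 (by linarith))
    rw [hpre, measure_empty]
    exact (le_antisymm ((measure_mono (Iic_subset_Iic.2 h0)).trans hν0.le) zero_le).symm
  rcases lt_or_ge a (1/2) with h2 | h2
  · have ha : a ∈ Ioo (0:ℝ) (1/2) := ⟨h0, h2⟩
    have ha1 : a ∈ Ioo (0:ℝ) 1 := ⟨h0, by linarith⟩
    have h1a : (1 - a) ∈ Ioo (0:ℝ) 1 := ⟨by linarith, by linarith⟩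
    have hlt : FXinv a < FXinv (1 - a) := hinvlt ha1 h1a (by linarith)
    have hpre : (fun y => min (FX y) (1 - FX y)) ⁻¹' Iic a
        = Iic (FXinv a) ∪ Ici (FXinv (1 - a)) := by
      ext y
      simp only [mem_preimage, mem_Iic, mem_union, mem_Ici, min_le_iff]
      constructor
      · rintro (h | h)
        · exact Or.inl (hFXmono.le_iff_le.mp (by rw [hinv a ha1]; exact h))
        · refine Or.inr (hFXmono.le_iff_le.mp ?_)
          rw [hinv _ h1a]; linarith
      · rintro (h | h)
        · refine Or.inl ?_
          have := hFXmono.le_iff_le.mpr h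
          rw [hinv a ha1] at this
          exact this
        · refine Or.inr ?_
          have := hFXmono.le_iff_le.mpr h
          rw [hinv _ h1a] at this
          linarith
    rw [hpre, measure_union (Iic_disjoint_Ici.2 (not_le.2 hlt)) measurableSet_Ici,
      hQIic, hQIci, hνIic a ha,
      ← ENNReal.ofReal_add (hFYnn _) (by linarith [hFYle (FXinv (1 - a))])]
    congr 1
    rw [hHdef]
    ring
  · have hpre : (fun y => min (FX y) (1 - FX y)) ⁻¹' Iic a = (univ : Set ℝ) := by
      refine eq_univ_of_forall fun y => ?_
      simp only [mem_preimage, mem_Iic, min_le_iff]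
      rcases le_total (FX y) (1/2) with h | h
      · exact Or.inl (h.trans h2)
      · exact Or.inr (by linarith)
    rw [hpre, measure_univ]
    have hle1 : ν (Ioo (0:ℝ) (1/2)) ≤ ν (Iic a) :=
      measure_mono (fun z hz => le_trans hz.2.le h2)
    have hle2 : ν (Iic a) ≤ ν univ := measure_mono (subset_univ _)
    rw [hνIoo] at hle1
    rw [hνuniv] at hle2
    exact (le_antisymm hle2 hle1).symm
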